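/- Let R be a Noetherian ring, X a finite poset, and φ : X → Spec(R) a coheight-preserving saturated embedding along the set Min(R) of minimal prime ideals of R. Then φ maps the set of minimal elements of X onto Min(R), i.e., φ(min X) = Min(R). -/

import Mathlib

/-- If `R` is a Noetherian ring, `X` a finite poset and
`φ : X → Spec R` a coheight-preserving saturated embedding along `Min(R)`,
then `φ` maps the minimal elements of `X` onto the minimal primes of `R`. -/
theorem coheight_preserving_saturated_embedding_min_image
    {X : Type*} [PartialOrder X] [Finite X]
    {R : Type*} [CommRing R] [IsNoetherianRing R]
    (φ : X → PrimeSpectrum R)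
    (hemb : ∀ a b : X, a ≤ b ↔ φ a ≤ φ b)
    (hsat : ∀ a b : X, a ⋖ b → φ a ⋖ φ b)
    (hcoht : ∀ P : PrimeSpectrum R, P.asIdeal ∈ minimalPrimes R →
      ∃ x : X, φ x = P ∧
        ringKrullDim (R ⧸ P.asIdeal) = Order.krullDim ↥(Set.Ici x)) :
    φ '' {x : X | IsMin x} = {P : PrimeSpectrum R | P.asIdeal ∈ minimalPrimes R} := by
  ext P
  constructor
  · rintro ⟨x, hx, rfl⟩
    -- φ x is a minimal prime: pick a minimal prime Q ≤ φ x and show equality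
    obtain ⟨Q, hQmin, hQle⟩ := Ideal.exists_minimalPrimes_le (I := (⊥ : Ideal R))
      (J := (φ x).asIdeal) bot_le
    have hQprime : Q.IsPrime := hQmin.1.1
    obtain ⟨z, hz, -⟩ := hcoht ⟨Q, hQprime⟩ hQmin
    have hzx : z ≤ x := (hemb z x).mpr (by rw [hz]; exact hQle)
    have hxz : x ≤ z := hx hzx
    have : φ x = ⟨Q, hQprime⟩ := le_antisymm (hz ▸ (hemb x z).mp hxz) (hz ▸ (hemb z x).mp hzx)
    simpa [this] using hQmin
  · intro hP
    obtain ⟨x, hx, -⟩ := hcoht P hP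
    refine ⟨x, ?_, hx⟩
    intro y hyx
    have hle : (φ y).asIdeal ≤ P.asIdeal := hx ▸ (hemb y x).mp hyx
    have hge : P.asIdeal ≤ (φ y).asIdeal := hP.2 ⟨inferInstance, bot_le⟩ hle
    exact (hemb x y).mpr (by rw [hx]; exact hge)
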